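/- If C and C' are two strongly tidy CRNs that share no intermediate species, then their union C ∪ C' is strongly tidy. -/

import Mathlib

namespace CRNVerif

variable {σ : Type} [DecidableEq σ]

/-- A state is a multiset of species. -/
abbrev State (σ : Type) := Multiset σ
/-- A reaction is a pair (reactants, products) of multisets of species. -/
abbrev Reaction (σ : Type) := Multiset σ × Multiset σ
/-- A pathway is a finite sequence of reactions. -/
abbrev Pathway (σ : Type) := List (Reaction σ)

/-- Result of applying reaction `r` in state `S` (i.e. `S ⊕ r`). -/
def applyRxn (S : State σ) (r : Reaction σ) : State σ := S - r.1 + r.2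

/-- Minimal initial state of a pathway: the smallest state in which
its reactions can occur in succession. -/
def minInit : Pathway σ → State σ
  | [] => 0
  | r :: p => r.1 + (minInit p - r.2)

/-- State reached from `S` after performing all reactions of `p` in order. -/
def finalFrom (S : State σ) : Pathway σ → State σ
  | [] => S
  | r :: p => finalFrom (applyRxn S r) p

/-- The final state of a pathway (starting from its minimal initial state). -/
def finalState (p : Pathway σ) : State σ := finalFrom (minInit p) p

/-- The state `S_i` after the first `i` reactions, starting from the minimal initial state. -/
def stateAt (p : Pathway σ) (i : ℕ) : State σ := finalFrom (minInit p) (p.take i)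

/-- A state is formal if it contains only formal species (as given by `fm`). -/
def FormalState (fm : σ → Bool) (S : State σ) : Prop := ∀ x ∈ S, fm x = true

/-- `Formal(S)`: the multiset obtained by removing all intermediate species from `S`. -/
def formalPart (fm : σ → Bool) (S : State σ) : State σ := S.filter (fun x => fm x = true)

/-- A reaction is trivial if reactants equal products. -/
def TrivialRxn (r : Reaction σ) : Prop := r.1 = r.2

/-- A CRN is a (finite) set of nontrivial reactions. -/
def NontrivialRxns (C : Finset (Reaction σ)) : Prop := ∀ r ∈ C, ¬ TrivialRxn r

/-- A formal CRN contains only formal reactions. -/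
def IsFormalCRN (fm : σ → Bool) (C : Finset (Reaction σ)) : Prop :=
  ∀ r ∈ C, FormalState fm r.1 ∧ FormalState fm r.2

/-- `p` is a pathway of the CRN `C`. -/
def PathwayOf (C : Finset (Reaction σ)) (p : Pathway σ) : Prop := ∀ r ∈ p, r ∈ C

/-- `Interleave l₁ l₂ l`: `l` can be partitioned into the two (order-preserving,
not necessarily contiguous) subsequences `l₁` and `l₂`. -/
inductive Interleave {α : Type u} : List α → List α → List α → Prop
  | nil : Interleave [] [] []
  | left {a : α} {l₁ l₂ l : List α} : Interleave l₁ l₂ l → Interleave (a :: l₁) l₂ (a :: l)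
  | right {a : α} {l₁ l₂ l : List α} : Interleave l₁ l₂ l → Interleave l₁ (a :: l₂) (a :: l)

/-- `InterleaveMany qs p`: `p` is generated by interleaving the lists in `qs`. -/
inductive InterleaveMany {α : Type u} : List (List α) → List α → Prop
  | nil : InterleaveMany [] []
  | cons {q r p : List α} {qs : List (List α)} :
      Interleave q r p → InterleaveMany qs r → InterleaveMany (q :: qs) p

/-- A pathway is semiformal if its minimal initial state is formal. -/
def Semiformal (fm : σ → Bool) (p : Pathway σ) : Prop := FormalState fm (minInit p)

/-- A formal pathway: a (nonempty) pathway whose minimal initial state and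
final state are both formal. -/
def FormalPathway (fm : σ → Bool) (p : Pathway σ) : Prop :=
  p ≠ [] ∧ FormalState fm (minInit p) ∧ FormalState fm (finalState p)

/-- A formal pathway is decomposable if it can be partitioned into two nonempty
subsequences that are each formal pathways. -/
def FDecomposable (fm : σ → Bool) (p : Pathway σ) : Prop :=
  ∃ q₁ q₂, q₁ ≠ [] ∧ q₂ ≠ [] ∧ Interleave q₁ q₂ p ∧
    FormalPathway fm q₁ ∧ FormalPathway fm q₂

/-- A prime formal pathway is a formal pathway that is not decomposable. -/
def PrimePathway (fm : σ → Bool) (p : Pathway σ) : Prop :=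
  FormalPathway fm p ∧ ¬ FDecomposable fm p

/-- The formal basis: the set of (initial state, final state) pairs of prime
formal pathways of `C`. -/
def formalBasis (fm : σ → Bool) (C : Finset (Reaction σ)) : Set (Reaction σ) :=
  { r | ∃ p, PathwayOf C p ∧ PrimePathway fm p ∧ r = (minInit p, finalState p) }

/-- Two sets of reactions are equal up to addition/removal of trivial reactions. -/
def EqUpToTrivial (A B : Set (Reaction σ)) : Prop :=
  {r ∈ A | ¬ TrivialRxn r} = {r ∈ B | ¬ TrivialRxn r}

/-- The reaction at (0-based) index `j` of `p` is a turning point: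
before it only formal species of the initial state appear, from it on only formal
species of the final state appear, and at the moment the turning point fires,
no formal species are left over. -/
def TurningAt (fm : σ → Bool) (p : Pathway σ) (j : ℕ) : Prop :=
  ∃ h : j < p.length,
    (∀ i ≤ j, formalPart fm (stateAt p i) ≤ minInit p) ∧
    (∀ i, j < i → i ≤ p.length → formalPart fm (stateAt p i) ≤ finalState p) ∧
    formalPart fm (stateAt p j - (p.get ⟨j, h⟩).1) = 0

/-- A regular formal pathway: one that implements a formal reaction,
i.e. has a turning point. -/
def RegularPathway (fm : σ → Bool) (p : Pathway σ) : Prop :=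
  FormalPathway fm p ∧ ∃ j, TurningAt fm p j

/-- A CRN is regular if every prime formal pathway is regular. -/
def RegularCRN (fm : σ → Bool) (C : Finset (Reaction σ)) : Prop :=
  ∀ p, PathwayOf C p → PrimePathway fm p → RegularPathway fm p

/-- `q` is a strong closing pathway for `p` (within CRN `C`): it can occur in the
final state of `p`, consumes no formal species, and leads back to a formal state. -/
def ClosingPathway (fm : σ → Bool) (C : Finset (Reaction σ)) (p q : Pathway σ) : Prop :=
  PathwayOf C q ∧ minInit q ≤ finalState p ∧ (∀ r ∈ q, formalPart fm r.1 = 0) ∧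
  FormalState fm (finalFrom (finalState p) q)

/-- A CRN is strongly tidy if every semiformal pathway has a strong closing pathway. -/
def StronglyTidy (fm : σ → Bool) (C : Finset (Reaction σ)) : Prop :=
  ∀ p, PathwayOf C p → Semiformal fm p → ∃ q, ClosingPathway fm C p q

/-- A semiformal pathway is decomposable if it can be partitioned into two
nonempty subsequences that are each semiformal. -/
def SDecomposable (fm : σ → Bool) (p : Pathway σ) : Prop :=
  ∃ q₁ q₂, q₁ ≠ [] ∧ q₂ ≠ [] ∧ Interleave q₁ q₂ p ∧ Semiformal fm q₁ ∧ Semiformal fm q₂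

/-- The width of a pathway: the maximum size of the states it passes through. -/
def width (p : Pathway σ) : ℕ :=
  ((List.range (p.length + 1)).map (fun i => Multiset.card (stateAt p i))).foldr max 0

/-- The branching factor of a CRN. -/
def branching (C : Finset (Reaction σ)) : ℕ :=
  C.sup (fun r => max (Multiset.card r.1) (Multiset.card r.2))

/-- Formal state `T` is reachable from `S` via reactions of `C`. -/
def Reachable (C : Finset (Reaction σ)) (S T : State σ) : Prop :=
  ∃ p, PathwayOf C p ∧ minInit p ≤ S ∧ finalFrom S p = T

/-- `C` and `C'` share no intermediate species: any species occurring in both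
CRNs is formal. -/
def NoSharedIntermediates (fm : σ → Bool) (C C' : Finset (Reaction σ)) : Prop :=
  ∀ r ∈ C, ∀ r' ∈ C', ∀ x : σ, x ∈ r.1 + r.2 → x ∈ r'.1 + r'.2 → fm x = true

/-- The formal closure of a pathway: the minimal state containing the formal part
of every state along the pathway. -/
def formalClosure (fm : σ → Bool) (p : Pathway σ) : State σ :=
  ((List.range (p.length + 1)).map (fun i => formalPart fm (stateAt p i))).foldr (· ∪ ·) 0

/-- The decomposed final states of a semiformal pathway: all pairs of final
states arising from decompositions into two (nonempty) semiformal pathways. -/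
def DFS (fm : σ → Bool) (p : Pathway σ) : Set (State σ × State σ) :=
  { T | ∃ q₁ q₂, q₁ ≠ [] ∧ q₂ ≠ [] ∧ Interleave q₁ q₂ p ∧
        Semiformal fm q₁ ∧ Semiformal fm q₂ ∧ T = (finalState q₁, finalState q₂) }

/-- The minimal state containing the formal parts of all states strictly after index `j`. -/
def rfsAt (fm : σ → Bool) (p : Pathway σ) (j : ℕ) : State σ :=
  (((List.range (p.length + 1)).filter (fun i => j < i)).map
      (fun i => formalPart fm (stateAt p i))).foldr (· ∪ ·) 0

/-- The regular final states of a pathway: the minimal states `T` witnessed by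
potential turning point reactions. -/
def RFS (fm : σ → Bool) (p : Pathway σ) : Set (State σ) :=
  { T | ∃ j, ∃ h : j < p.length,
      (∀ i ≤ j, formalPart fm (stateAt p i) ≤ minInit p) ∧
      formalPart fm (stateAt p j - (p.get ⟨j, h⟩).1) = 0 ∧
      T = rfsAt fm p j }

/-- The signature of a semiformal pathway: (initial state, final state, width,
formal closure, DFS, RFS). -/
def signature (fm : σ → Bool) (p : Pathway σ) :
    State σ × State σ × ℕ × State σ × Set (State σ × State σ) × Set (State σ) :=
  (minInit p, finalState p, width p, formalClosure fm p, DFS fm p, RFS fm p)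

/-- An annotated prime pathway: exactly its chosen turning point is annotated,
with the corresponding formal basis reaction. -/
def GoodAnnotation (fm : σ → Bool) (ap : List (Reaction σ × Option (Reaction σ))) : Prop :=
  PrimePathway fm (ap.map Prod.fst) ∧
  ∃ j, TurningAt fm (ap.map Prod.fst) j ∧
    ap.map Prod.snd = (List.range ap.length).map
      (fun i => if i = j then
          some (minInit (ap.map Prod.fst), finalState (ap.map Prod.fst)) else none)

/-- `p` can be interpreted as `q`: `q` can occur in the initial state of `p`, has
the same net effect, and there is a decomposition of `p` into prime formal pathways
such that replacing a chosen turning point of each by the corresponding formal basis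
element and removing all other reactions yields `q`. -/
def Interpreted (fm : σ → Bool) (p q : Pathway σ) : Prop :=
  minInit q ≤ minInit p ∧
  finalFrom (minInit p) q = finalState p ∧
  ∃ ap : List (Reaction σ × Option (Reaction σ)),
    ap.map Prod.fst = p ∧ (ap.map Prod.snd).reduceOption = q ∧
    ∃ aps, InterleaveMany aps ap ∧ ∀ a ∈ aps, GoodAnnotation fm a


section Aux

variable {σ : Type} [DecidableEq σ]

lemma msub_add_le (a b c : Multiset σ) : a + b - c ≤ (a - c) + b := by
  rw [Multiset.le_iff_count]
  intro x
  simp only [Multiset.count_sub, Multiset.count_add]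
  omega

lemma madd_sub_le (a b c : Multiset σ) : a + b - c ≤ a + (b - c) := by
  rw [Multiset.le_iff_count]
  intro x
  simp only [Multiset.count_sub, Multiset.count_add]
  omega

lemma finalFrom_append' (S : State σ) (p q : Pathway σ) :
    finalFrom S (p ++ q) = finalFrom (finalFrom S p) q := by
  induction p generalizing S with
  | nil => rfl
  | cons r p ih => simp [finalFrom, ih]

lemma mem_minInit' {x : σ} {p : Pathway σ} (hx : x ∈ minInit p) : ∃ r ∈ p, x ∈ r.1 := by
  induction p with
  | nil => simp [minInit] at hx
  | cons r p ih =>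
    rw [minInit, Multiset.mem_add] at hx
    rcases hx with h | h
    · exact ⟨r, by simp, h⟩
    · obtain ⟨s, hs, hxs⟩ := ih (Multiset.mem_of_le (tsub_le_self) h)
      exact ⟨s, by simp [hs], hxs⟩

lemma mem_finalFrom' {x : σ} {S : State σ} {p : Pathway σ} (hx : x ∈ finalFrom S p) :
    x ∈ S ∨ ∃ r ∈ p, x ∈ r.2 := by
  induction p generalizing S with
  | nil => exact Or.inl hx
  | cons r p ih =>
    rcases ih hx with h | ⟨s, hs, hxs⟩
    · rw [applyRxn, Multiset.mem_add] at h
      rcases h with h | h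
      · exact Or.inl (Multiset.mem_of_le (tsub_le_self) h)
      · exact Or.inr ⟨r, by simp, h⟩
    · exact Or.inr ⟨s, by simp [hs], hxs⟩

lemma minInit_cons_head_le {r : Reaction σ} {p : Pathway σ} {S : State σ}
    (h : minInit (r :: p) ≤ S) : r.1 ≤ S :=
  le_trans (Multiset.le_add_right _ _) h

lemma minInit_cons_tail_le {r : Reaction σ} {p : Pathway σ} {S : State σ}
    (h : minInit (r :: p) ≤ S) : minInit p ≤ applyRxn S r := by
  have h1 : minInit p - r.2 ≤ S - r.1 := le_tsub_of_add_le_left h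
  calc minInit p ≤ (minInit p - r.2) + r.2 := le_tsub_add
    _ ≤ (S - r.1) + r.2 := add_le_add_left h1 _
    _ = applyRxn S r := rfl

lemma finalFrom_add' {T : State σ} {p : Pathway σ} :
    ∀ {S : State σ}, minInit p ≤ S → finalFrom (S + T) p = finalFrom S p + T := by
  induction p with
  | nil => intro S _; rfl
  | cons r p ih =>
    intro S h
    have hr1 : r.1 ≤ S := minInit_cons_head_le h
    have key : applyRxn (S + T) r = applyRxn S r + T := by
      show S + T - r.1 + r.2 = (S - r.1 + r.2) + T
      rw [add_comm S T, add_tsub_assoc_of_le hr1]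
      rw [add_comm T (S - r.1), add_assoc, add_comm T r.2, ← add_assoc]
    rw [finalFrom, finalFrom, key, ih (minInit_cons_tail_le h)]

lemma Interleave.symm' {α : Type u} {l₁ l₂ l : List α} (h : Interleave l₁ l₂ l) :
    Interleave l₂ l₁ l := by
  induction h with
  | nil => exact .nil
  | left _ ih => exact .right ih
  | right _ ih => exact .left ih

lemma interleave_filter' {α : Type u} (P : α → Prop) [DecidablePred P] (l : List α) :
    Interleave (l.filter (fun a => decide (P a))) (l.filter (fun a => decide (¬ P a))) l := by
  induction l with
  | nil => exact .nil
  | cons a l ih =>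
    by_cases h : P a
    · simpa [List.filter_cons, h] using Interleave.left ih
    · simpa [List.filter_cons, h] using Interleave.right ih

lemma interleave_append' {α : Type u} (l₁ l₂ : List α) : Interleave l₁ l₂ (l₁ ++ l₂) := by
  induction l₁ with
  | nil =>
    induction l₂ with
    | nil => exact .nil
    | cons a l ih => exact .right ih
  | cons a l ih => exact .left ih

lemma minInit_le_interleave {q₁ q₂ p : Pathway σ} (h : Interleave q₁ q₂ p) :
    minInit p ≤ minInit q₁ + minInit q₂ := by
  induction h with
  | nil => simp [minInit]
  | @left a l₁ l₂ l _ ih =>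
    rw [minInit, minInit]
    calc a.1 + (minInit l - a.2) ≤ a.1 + ((minInit l₁ + minInit l₂) - a.2) :=
          add_le_add_right (tsub_le_tsub_right ih _) _
      _ ≤ a.1 + ((minInit l₁ - a.2) + minInit l₂) :=
          add_le_add_right (msub_add_le _ _ _) _
      _ = (a.1 + (minInit l₁ - a.2)) + minInit l₂ := by rw [add_assoc]
  | @right a l₁ l₂ l _ ih =>
    rw [minInit, minInit]
    calc a.1 + (minInit l - a.2) ≤ a.1 + ((minInit l₁ + minInit l₂) - a.2) :=
          add_le_add_right (tsub_le_tsub_right ih _) _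
      _ ≤ a.1 + (minInit l₁ + (minInit l₂ - a.2)) :=
          add_le_add_right (madd_sub_le _ _ _) _
      _ = minInit l₁ + (a.1 + (minInit l₂ - a.2)) := by
          rw [← add_assoc, add_comm a.1 (minInit l₁), add_assoc]

lemma finalFrom_interleave {q₁ q₂ p : Pathway σ} (h : Interleave q₁ q₂ p) :
    ∀ {S₁ S₂ : State σ}, minInit q₁ ≤ S₁ → minInit q₂ ≤ S₂ →
      finalFrom (S₁ + S₂) p = finalFrom S₁ q₁ + finalFrom S₂ q₂ := by
  induction h with
  | nil => intro S₁ S₂ _ _; rfl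
  | @left a l₁ l₂ l _ ih =>
    intro S₁ S₂ h₁ h₂
    have hr1 : a.1 ≤ S₁ := minInit_cons_head_le h₁
    have key : applyRxn (S₁ + S₂) a = applyRxn S₁ a + S₂ := by
      show S₁ + S₂ - a.1 + a.2 = (S₁ - a.1 + a.2) + S₂
      rw [add_comm S₁ S₂, add_tsub_assoc_of_le hr1]
      rw [add_comm S₂ (S₁ - a.1), add_assoc, add_comm S₂ a.2, ← add_assoc]
    rw [finalFrom, finalFrom, key, ih (minInit_cons_tail_le h₁) h₂]
  | @right a l₁ l₂ l _ ih =>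
    intro S₁ S₂ h₁ h₂
    have hr1 : a.1 ≤ S₂ := minInit_cons_head_le h₂
    have key : applyRxn (S₁ + S₂) a = S₁ + applyRxn S₂ a := by
      show S₁ + S₂ - a.1 + a.2 = S₁ + (S₂ - a.1 + a.2)
      rw [add_tsub_assoc_of_le hr1, add_assoc]
    rw [finalFrom, finalFrom, key, ih h₁ (minInit_cons_tail_le h₂)]

lemma minInit_filter_eq {g : σ → Prop} [DecidablePred g] {q₁ q₂ p : Pathway σ}
    (h : Interleave q₁ q₂ p)
    (hz : ∀ r ∈ q₂, Multiset.filter g r.1 = 0 ∧ Multiset.filter g r.2 = 0) :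
    Multiset.filter g (minInit p) = Multiset.filter g (minInit q₁) := by
  induction h with
  | nil => rfl
  | @left a l₁ l₂ l _ ih =>
    rw [minInit, minInit, Multiset.filter_add, Multiset.filter_add,
      Multiset.filter_sub, Multiset.filter_sub, ih hz]
  | @right a l₁ l₂ l _ ih =>
    have hz' := hz a (by simp)
    rw [minInit, Multiset.filter_add, Multiset.filter_sub, hz'.1, hz'.2, zero_add,
      tsub_zero, ih (fun r hr => hz r (by simp [hr]))]

end Aux


/-- The union of two strongly tidy CRNs sharing no intermediate species is strongly tidy. -/
theorem union_stronglyTidy {σ : Type} [DecidableEq σ] (fm : σ → Bool)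
    (C C' : Finset (Reaction σ))
    (hC : NontrivialRxns C) (hC' : NontrivialRxns C')
    (hdisj : NoSharedIntermediates fm C C')
    (ht : StronglyTidy fm C) (ht' : StronglyTidy fm C') :
    StronglyTidy fm (C ∪ C') := by
  classical
  intro p hp hsemi
  -- split p into the C-part q₁ and the C'-part q₂
  set q₁ : Pathway σ := p.filter (fun r => decide (r ∈ C)) with hq₁def
  set q₂ : Pathway σ := p.filter (fun r => decide (¬ r ∈ C)) with hq₂def
  have hinter : Interleave q₁ q₂ p := interleave_filter' (fun r => r ∈ C) p
  have hq₁C : PathwayOf C q₁ := by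
    intro r hr
    rw [hq₁def, List.mem_filter] at hr
    simpa using hr.2
  have hq₂C' : PathwayOf C' q₂ := by
    intro r hr
    rw [hq₂def, List.mem_filter] at hr
    have hrC : r ∉ C := by simpa using hr.2
    rcases Finset.mem_union.1 (hp r hr.1) with h | h
    · exact absurd h hrC
    · exact h
  -- intermediate-species predicates
  set g₁ : σ → Prop := fun x => fm x = false ∧ ∃ r ∈ C, x ∈ r.1 + r.2 with hg₁def
  set g₂ : σ → Prop := fun x => fm x = false ∧ ∃ r ∈ C', x ∈ r.1 + r.2 with hg₂def
  have hg₁g₂ : ∀ x : σ, ¬ (g₁ x ∧ g₂ x) := by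
    rintro x ⟨⟨hf, r, hr, hxr⟩, ⟨_, r', hr', hxr'⟩⟩
    have := hdisj r hr r' hr' x hxr hxr'
    simp [this] at hf
  -- reactions of C' contain no g₁ species, and vice versa
  have hz₁ : ∀ r ∈ q₂, Multiset.filter g₁ r.1 = 0 ∧ Multiset.filter g₁ r.2 = 0 := by
    intro r hr
    have hrC' : r ∈ C' := hq₂C' r hr
    constructor <;>
    · rw [Multiset.filter_eq_nil]
      rintro x hx ⟨hf, r₀, hr₀, hxr₀⟩
      have := hdisj r₀ hr₀ r hrC' x hxr₀ (by simp [hx])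
      simp [this] at hf
  have hz₂ : ∀ r ∈ q₁, Multiset.filter g₂ r.1 = 0 ∧ Multiset.filter g₂ r.2 = 0 := by
    intro r hr
    have hrC : r ∈ C := hq₁C r hr
    constructor <;>
    · rw [Multiset.filter_eq_nil]
      rintro x hx ⟨hf, r₀, hr₀, hxr₀⟩
      have := hdisj r hrC r₀ hr₀ x (by simp [hx]) hxr₀
      simp [this] at hf
  -- q₁ and q₂ are semiformal
  have hsemi₁ : Semiformal fm q₁ := by
    intro x hx
    by_contra hxf
    have hf : fm x = false := by
      cases h : fm x with
      | false => rfl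
      | true => exact absurd h hxf
    have hg : g₁ x := by
      obtain ⟨r, hr, hxr⟩ := mem_minInit' hx
      exact ⟨hf, r, hq₁C r hr, by simp [hxr]⟩
    have : x ∈ Multiset.filter g₁ (minInit q₁) := Multiset.mem_filter.2 ⟨hx, hg⟩
    rw [← minInit_filter_eq hinter hz₁] at this
    have := hsemi x (Multiset.mem_of_le (Multiset.filter_le _ _) this)
    simp [hf] at this
  have hsemi₂ : Semiformal fm q₂ := by
    intro x hx
    by_contra hxf
    have hf : fm x = false := by
      cases h : fm x with
      | false => rfl
      | true => exact absurd h hxf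
    have hg : g₂ x := by
      obtain ⟨r, hr, hxr⟩ := mem_minInit' hx
      exact ⟨hf, r, hq₂C' r hr, by simp [hxr]⟩
    have : x ∈ Multiset.filter g₂ (minInit q₂) := Multiset.mem_filter.2 ⟨hx, hg⟩
    rw [← minInit_filter_eq hinter.symm' hz₂] at this
    have := hsemi x (Multiset.mem_of_le (Multiset.filter_le _ _) this)
    simp [hf] at this
  -- get closing pathways for q₁ and q₂
  obtain ⟨q, hqC, hqle, hqint, hqfm⟩ := ht q₁ hq₁C hsemi₁
  obtain ⟨q', hq'C, hq'le, hq'int, hq'fm⟩ := ht' q₂ hq₂C' hsemi₂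
  -- the key arithmetic: finalState q₁ + finalState q₂ = finalState p + D, D formal
  set D : State σ := (minInit q₁ + minInit q₂) - minInit p with hDdef
  have hDle : minInit p + D = minInit q₁ + minInit q₂ :=
    add_tsub_cancel_of_le (minInit_le_interleave hinter)
  have hkey : finalState q₁ + finalState q₂ = finalState p + D := by
    have h2 : finalFrom (minInit q₁ + minInit q₂) p = finalState q₁ + finalState q₂ :=
      finalFrom_interleave hinter le_rfl le_rfl
    have h3 : finalFrom (minInit p + D) p = finalState p + D := finalFrom_add' le_rfl
    rw [← h2, ← hDle, h3]
  have hDformal : ∀ x ∈ D, fm x = true := by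
    intro x hx
    have : x ∈ minInit q₁ + minInit q₂ :=
      Multiset.mem_of_le tsub_le_self hx
    rcases Multiset.mem_add.1 this with h | h
    · exact hsemi₁ x h
    · exact hsemi₂ x h
  have hfsp_le : finalState p ≤ finalState q₁ + finalState q₂ := by
    rw [hkey]; exact Multiset.le_add_right _ _
  -- every element of finalState q₂ is formal or a C' species; so filter g₁ is 0
  have hfilt₁F₂ : Multiset.filter g₁ (finalState q₂) = 0 := by
    rw [Multiset.filter_eq_nil]
    rintro x hx ⟨hf, r₀, hr₀, hxr₀⟩
    rcases mem_finalFrom' hx with h | ⟨r, hr, hxr⟩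
    · have := hsemi₂ x h; simp [this] at hf
    · have := hdisj r₀ hr₀ r (hq₂C' r hr) x hxr₀ (by simp [hxr])
      simp [this] at hf
  have hfilt₂F₁ : Multiset.filter g₂ (finalState q₁) = 0 := by
    rw [Multiset.filter_eq_nil]
    rintro x hx ⟨hf, r₀, hr₀, hxr₀⟩
    rcases mem_finalFrom' hx with h | ⟨r, hr, hxr⟩
    · have := hsemi₁ x h; simp [this] at hf
    · have := hdisj r (hq₁C r hr) r₀ hr₀ x (by simp [hxr]) hxr₀
      simp [this] at hf
  have hfiltD₁ : Multiset.filter g₁ D = 0 := by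
    rw [Multiset.filter_eq_nil]; rintro x hx ⟨hf, _⟩
    have := hDformal x hx; simp [this] at hf
  have hfiltD₂ : Multiset.filter g₂ D = 0 := by
    rw [Multiset.filter_eq_nil]; rintro x hx ⟨hf, _⟩
    have := hDformal x hx; simp [this] at hf
  -- filter g₁ of finalState p equals filter g₁ of finalState q₁
  have hfilt₁ : Multiset.filter g₁ (finalState p) = Multiset.filter g₁ (finalState q₁) := by
    have := congrArg (Multiset.filter g₁) hkey
    rwa [Multiset.filter_add, Multiset.filter_add, hfilt₁F₂, hfiltD₁, add_zero, add_zero,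
      eq_comm] at this
  have hfilt₂ : Multiset.filter g₂ (finalState p) = Multiset.filter g₂ (finalState q₂) := by
    have := congrArg (Multiset.filter g₂) hkey
    rwa [Multiset.filter_add, Multiset.filter_add, hfilt₂F₁, hfiltD₂, add_zero, zero_add,
      eq_comm] at this
  -- minInit q consists of g₁ species, minInit q' of g₂ species
  have hq_g₁ : ∀ x ∈ minInit q, g₁ x := by
    intro x hx
    obtain ⟨r, hr, hxr⟩ := mem_minInit' hx
    have hf : fm x = false := by
      by_contra h
      have hft : fm x = true := by
        cases hh : fm x with
        | true => rfl
        | false => exact absurd hh h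
      have : x ∈ formalPart fm r.1 := Multiset.mem_filter.2 ⟨hxr, hft⟩
      rw [hqint r hr] at this
      exact absurd this (Multiset.notMem_zero x)
    exact ⟨hf, r, hqC r hr, by simp [hxr]⟩
  have hq'_g₂ : ∀ x ∈ minInit q', g₂ x := by
    intro x hx
    obtain ⟨r, hr, hxr⟩ := mem_minInit' hx
    have hf : fm x = false := by
      by_contra h
      have hft : fm x = true := by
        cases hh : fm x with
        | true => rfl
        | false => exact absurd hh h
      have : x ∈ formalPart fm r.1 := Multiset.mem_filter.2 ⟨hxr, hft⟩
      rw [hq'int r hr] at this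
      exact absurd this (Multiset.notMem_zero x)
    exact ⟨hf, r, hq'C r hr, by simp [hxr]⟩
  have hqle' : minInit q ≤ Multiset.filter g₁ (finalState p) := by
    rw [hfilt₁, Multiset.le_filter]; exact ⟨hqle, hq_g₁⟩
  have hq'le' : minInit q' ≤ Multiset.filter g₂ (finalState p) := by
    rw [hfilt₂, Multiset.le_filter]; exact ⟨hq'le, hq'_g₂⟩
  have hdisjsum : Multiset.filter g₁ (finalState p) + Multiset.filter g₂ (finalState p)
      ≤ finalState p := by
    rw [Multiset.filter_add_filter]
    have : Multiset.filter (fun a => g₁ a ∧ g₂ a) (finalState p) = 0 := by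
      rw [Multiset.filter_eq_nil]; exact fun a _ => hg₁g₂ a
    rw [this, add_zero]
    exact Multiset.filter_le _ _
  have hqsum : minInit q + minInit q' ≤ finalState p :=
    le_trans (add_le_add hqle' hq'le') hdisjsum
  -- the combined closing pathway
  refine ⟨q ++ q', ?_, ?_, ?_, ?_⟩
  · intro r hr
    rcases List.mem_append.1 hr with h | h
    · exact Finset.mem_union_left _ (hqC r h)
    · exact Finset.mem_union_right _ (hq'C r h)
  · exact le_trans (minInit_le_interleave (interleave_append' q q')) hqsum
  · intro r hr
    rcases List.mem_append.1 hr with h | h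
    · exact hqint r h
    · exact hq'int r h
  · -- formality of the resulting state
    rw [finalFrom_append']
    -- step 1 : run q from finalState p
    have hqle'' : minInit q ≤ finalState p := le_trans hqle' (Multiset.filter_le _ _)
    have e1 : finalFrom (finalState p) q = finalFrom (minInit q) q + (finalState p - minInit q) := by
      conv_lhs => rw [← add_tsub_cancel_of_le hqle'']
      exact finalFrom_add' le_rfl
    -- minInit q' fits afterwards
    have hq'fits : minInit q' ≤ finalFrom (finalState p) q := by
      rw [e1]
      refine le_trans ?_ (Multiset.le_add_left _ _)
      refine le_trans hq'le' ?_
      refine le_trans (le_tsub_of_add_le_right ?_) (tsub_le_tsub_left (le_trans hqle' le_rfl) _)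
      rw [add_comm]; exact hdisjsum
    have e2 : finalFrom (finalFrom (finalState p) q) q' =
        finalFrom (minInit q') q' + (finalFrom (finalState p) q - minInit q') := by
      conv_lhs => rw [← add_tsub_cancel_of_le hq'fits]
      exact finalFrom_add' le_rfl
    -- compare with runs from finalState q₁ and finalState q₂
    have e3 : finalFrom (finalState q₁) q = finalFrom (minInit q) q + (finalState q₁ - minInit q) := by
      conv_lhs => rw [← add_tsub_cancel_of_le hqle]
      exact finalFrom_add' le_rfl
    have e4 : finalFrom (finalState q₂) q' =
        finalFrom (minInit q') q' + (finalState q₂ - minInit q') := by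
      conv_lhs => rw [← add_tsub_cancel_of_le hq'le]
      exact finalFrom_add' le_rfl
    have hbound : finalFrom (finalFrom (finalState p) q) q' ≤
        finalFrom (finalState q₁) q + finalFrom (finalState q₂) q' := by
      rw [e2, e3, e4, e1]
      have h5 : finalState p - minInit q ≤ (finalState q₁ - minInit q) + finalState q₂ :=
        le_trans (tsub_le_tsub_right hfsp_le _) (msub_add_le _ _ _)
      calc finalFrom (minInit q') q' +
            (finalFrom (minInit q) q + (finalState p - minInit q) - minInit q')
          ≤ finalFrom (minInit q') q' +
            (finalFrom (minInit q) q + ((finalState q₁ - minInit q) + finalState q₂) - minInit q') :=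
            add_le_add_right (tsub_le_tsub_right (add_le_add_right h5 _) _) _
        _ = finalFrom (minInit q') q' +
            ((finalFrom (minInit q) q + (finalState q₁ - minInit q)) + finalState q₂ - minInit q') := by
            rw [add_assoc]
        _ ≤ finalFrom (minInit q') q' +
            ((finalFrom (minInit q) q + (finalState q₁ - minInit q)) + (finalState q₂ - minInit q')) :=
            add_le_add_right (madd_sub_le _ _ _) _
        _ = (finalFrom (minInit q) q + (finalState q₁ - minInit q)) +
            (finalFrom (minInit q') q' + (finalState q₂ - minInit q')) := add_left_comm _ _ _
    intro x hx
    have hx' := Multiset.mem_of_le hbound hx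
    rcases Multiset.mem_add.1 hx' with h | h
    · exact hqfm x h
    · exact hq'fm x h


end CRNVerif
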